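/- Let p, p̃ : ℝ → ℝ be functions differentiable at c = −2 such that for all c in some neighborhood of −2 one has f_c³(p(c)) = p(c) and f_c³(p̃(c)) = p̃(c), with p(−2) = 2 cos(4π/7) and p̃(−2) = 2 cos(4π/9). Then there exists δ > 0 such that for every parameter c ∈ (−2, −2 + δ) one has |M(c, p(c))| > |M(c, p̃(c))|, where M(c, x) := 8 x (x² + c) ((x² + c)² + c) is the derivative of f_c³ at x. That is, for c slightly larger than −2 the multiplier of the period-3 orbit through p(c) is strictly larger in absolute value than the multiplier of the period-3 orbit through p̃(c). -/

import Mathlib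

open Real Filter

/-- The quadratic map `f_c(x) = x² + c`. -/
def fc (c : ℝ) : ℝ → ℝ := fun x => x ^ 2 + c

/-- The derivative of the third iterate `f_c³` at `x`. -/
def M (c x : ℝ) : ℝ := 8 * x * (x ^ 2 + c) * ((x ^ 2 + c) ^ 2 + c)

lemma iter3 (c x : ℝ) : (fc c)^[3] x = ((x ^ 2 + c) ^ 2 + c) ^ 2 + c := by
  show fc c (fc c (fc c x)) = _
  simp [fc]

/-- minimal polynomial of `a = 2 cos (4π/7)` -/
lemma cubic_seven : (2 * Real.cos (4 * π / 7)) ^ 3 + (2 * Real.cos (4 * π / 7)) ^ 2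
    - 2 * (2 * Real.cos (4 * π / 7)) - 1 = 0 := by
  set t := Real.cos (4 * π / 7) with ht
  have h4 : Real.cos (4 * (4 * π / 7)) = Real.cos (2 * π / 7) := by
    rw [show 4 * (4 * π / 7) = 2 * π / 7 + 2 * π by ring, Real.cos_add_two_pi]
  have h3 : Real.cos (3 * (4 * π / 7)) = Real.cos (2 * π / 7) := by
    rw [show 3 * (4 * π / 7) = 2 * π - 2 * π / 7 by ring, Real.cos_two_pi_sub]
  have e4 : Real.cos (4 * (4 * π / 7)) = 2 * (2 * t ^ 2 - 1) ^ 2 - 1 := by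
    rw [show 4 * (4 * π / 7) = 2 * (2 * (4 * π / 7)) by ring, Real.cos_two_mul,
      Real.cos_two_mul]
  have e3 : Real.cos (3 * (4 * π / 7)) = 4 * t ^ 3 - 3 * t := Real.cos_three_mul _
  have key : 2 * (2 * t ^ 2 - 1) ^ 2 - 1 = 4 * t ^ 3 - 3 * t := by
    rw [← e4, ← e3, h4, h3]
  have hle : t ≤ 0 := by
    apply Real.cos_nonpos_of_pi_div_two_le_of_le <;> nlinarith [Real.pi_pos]
  have hfact : (t - 1) * (8 * t ^ 3 + 4 * t ^ 2 - 4 * t - 1) = 0 := by linear_combination key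
  rcases mul_eq_zero.mp hfact with h | h
  · nlinarith
  · linear_combination h

/-- minimal polynomial of `b = 2 cos (4π/9)` -/
lemma cubic_nine : (2 * Real.cos (4 * π / 9)) ^ 3 - 3 * (2 * Real.cos (4 * π / 9)) + 1 = 0 := by
  set t := Real.cos (4 * π / 9) with ht
  have h3 : Real.cos (3 * (4 * π / 9)) = -(1 / 2) := by
    rw [show 3 * (4 * π / 9) = 2 * π - (π - π / 3) by ring, Real.cos_two_pi_sub,
      Real.cos_pi_sub, Real.cos_pi_div_three]
  have e3 : Real.cos (3 * (4 * π / 9)) = 4 * t ^ 3 - 3 * t := Real.cos_three_mul _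
  rw [e3] at h3
  linear_combination 2 * h3

theorem stmt_19 (p ptilde : ℝ → ℝ)
    (hp : DifferentiableAt ℝ p (-2)) (hptilde : DifferentiableAt ℝ ptilde (-2))
    (hpfix : ∀ᶠ c in nhds (-2 : ℝ), (fc c)^[3] (p c) = p c)
    (hptildefix : ∀ᶠ c in nhds (-2 : ℝ), (fc c)^[3] (ptilde c) = ptilde c)
    (hpval : p (-2) = 2 * Real.cos (4 * π / 7))
    (hptildeval : ptilde (-2) = 2 * Real.cos (4 * π / 9)) :
    ∃ δ : ℝ, 0 < δ ∧ ∀ c : ℝ, -2 < c → c < -2 + δ →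
      |M c (ptilde c)| < |M c (p c)| := by
  -- abbreviations
  have hcuba : (p (-2)) ^ 3 + (p (-2)) ^ 2 - 2 * p (-2) - 1 = 0 := by
    rw [hpval]; exact cubic_seven
  have hcubb : (ptilde (-2)) ^ 3 - 3 * ptilde (-2) + 1 = 0 := by
    rw [hptildeval]; exact cubic_nine
  set a := p (-2) with ha
  set b := ptilde (-2) with hb
  set P := deriv p (-2) with hP
  set Q := deriv ptilde (-2) with hQ
  have hp' : HasDerivAt p P (-2) := hp.hasDerivAt
  have hq' : HasDerivAt ptilde Q (-2) := hptilde.hasDerivAt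
  -- derivative chain for p
  have hu : HasDerivAt (fun c => (p c) ^ 2 + c) (2 * a * P + 1) (-2) := by
    have h := (hp'.fun_pow 2).fun_add (hasDerivAt_id (-2))
    refine h.congr_deriv (Eq.symm ?_)
    push_cast; ring
  have hv : HasDerivAt (fun c => ((p c) ^ 2 + c) ^ 2 + c)
      (2 * (a ^ 2 - 2) * (2 * a * P + 1) + 1) (-2) := by
    have h := (hu.fun_pow 2).fun_add (hasDerivAt_id (-2))
    refine h.congr_deriv (Eq.symm ?_)
    push_cast; ring
  have hw : HasDerivAt (fun c => (((p c) ^ 2 + c) ^ 2 + c) ^ 2 + c)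
      (2 * ((a ^ 2 - 2) ^ 2 - 2) * (2 * (a ^ 2 - 2) * (2 * a * P + 1) + 1) + 1) (-2) := by
    have h := (hv.fun_pow 2).fun_add (hasDerivAt_id (-2))
    refine h.congr_deriv (Eq.symm ?_)
    push_cast; ring
  have hLp : (fun c => (((p c) ^ 2 + c) ^ 2 + c) ^ 2 + c) =ᶠ[nhds (-2 : ℝ)] p :=
    hpfix.mono fun c hc => by rw [← hc, iter3]
  have heqd : 2 * ((a ^ 2 - 2) ^ 2 - 2) * (2 * (a ^ 2 - 2) * (2 * a * P + 1) + 1) + 1 = P :=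
    (hw.congr_of_eventuallyEq hLp.symm).unique hp'
  have h7 : 7 * P = 5 - 2 * a - 2 * a ^ 2 := by
    linear_combination heqd + (((-6 : ℝ) + 10 * a + 4 * a ^ 2 - 4 * a ^ 3)
      + ((-8 : ℝ) - 16 * a + 24 * a ^ 2 + 8 * a ^ 3 - 8 * a ^ 4) * P) * hcuba
  -- derivative chain for ptilde
  have hut : HasDerivAt (fun c => (ptilde c) ^ 2 + c) (2 * b * Q + 1) (-2) := by
    have h := (hq'.fun_pow 2).fun_add (hasDerivAt_id (-2))
    refine h.congr_deriv (Eq.symm ?_)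
    push_cast; ring
  have hvt : HasDerivAt (fun c => ((ptilde c) ^ 2 + c) ^ 2 + c)
      (2 * (b ^ 2 - 2) * (2 * b * Q + 1) + 1) (-2) := by
    have h := (hut.fun_pow 2).fun_add (hasDerivAt_id (-2))
    refine h.congr_deriv (Eq.symm ?_)
    push_cast; ring
  have hwt : HasDerivAt (fun c => (((ptilde c) ^ 2 + c) ^ 2 + c) ^ 2 + c)
      (2 * ((b ^ 2 - 2) ^ 2 - 2) * (2 * (b ^ 2 - 2) * (2 * b * Q + 1) + 1) + 1) (-2) := by
    have h := (hvt.fun_pow 2).fun_add (hasDerivAt_id (-2))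
    refine h.congr_deriv (Eq.symm ?_)
    push_cast; ring
  have hLq : (fun c => (((ptilde c) ^ 2 + c) ^ 2 + c) ^ 2 + c) =ᶠ[nhds (-2 : ℝ)] ptilde :=
    hptildefix.mono fun c hc => by rw [← hc, iter3]
  have heqdt : 2 * ((b ^ 2 - 2) ^ 2 - 2) * (2 * (b ^ 2 - 2) * (2 * b * Q + 1) + 1) + 1 = Q :=
    (hwt.congr_of_eventuallyEq hLq.symm).unique hq'
  have h9 : 9 * Q = -7 - 2 * b + 2 * b ^ 2 := by
    linear_combination (-1 : ℝ) * heqdt + (((-4 : ℝ) - 10 * b + 4 * b ^ 3)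
      + ((8 : ℝ) - 8 * b - 24 * b ^ 2 + 8 * b ^ 4) * Q) * hcubb
  -- multiplier along p has derivative -16 at -2
  have hg : HasDerivAt (fun c => M c (p c)) (-16) (-2) := by
    have h8p : HasDerivAt (fun c => 8 * p c) (8 * P) (-2) := hp'.const_mul 8
    have hB := (h8p.fun_mul hu).fun_mul hv
    have hclean : HasDerivAt
        (fun c => 8 * p c * ((p c) ^ 2 + c) * (((p c) ^ 2 + c) ^ 2 + c)) (-16) (-2) := by
      refine hB.congr_deriv (Eq.symm ?_)
      linear_combination (-((-32 / 7 : ℝ) + (240 / 7) * a ^ 2 - (240 / 7) * a ^ 4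
          + 8 * a ^ 6)) * h7
        - ((48 / 7 : ℝ) - (608 / 7) * a + (536 / 7) * a ^ 3 - 16 * a ^ 5) * hcuba
    exact hclean
  -- multiplier along ptilde has derivative 24 at -2
  have hgt : HasDerivAt (fun c => M c (ptilde c)) 24 (-2) := by
    have h8q : HasDerivAt (fun c => 8 * ptilde c) (8 * Q) (-2) := hq'.const_mul 8
    have hB := (h8q.fun_mul hut).fun_mul hvt
    have hclean : HasDerivAt
        (fun c => 8 * ptilde c * ((ptilde c) ^ 2 + c) * (((ptilde c) ^ 2 + c) ^ 2 + c))
        24 (-2) := by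
      refine hB.congr_deriv (Eq.symm ?_)
      linear_combination (-((-32 / 9 : ℝ) + (80 / 3) * b ^ 2 - (80 / 3) * b ^ 4
          + (56 / 9) * b ^ 6)) * h9
        - ((8 / 9 : ℝ) + (664 / 9) * b + (248 / 9) * b ^ 2 - (536 / 9) * b ^ 3
          - (112 / 9) * b ^ 4 + (112 / 9) * b ^ 5) * hcubb
    exact hclean
  -- values at -2
  have hvalp : M (-2) (p (-2)) = 8 := by
    show 8 * a * (a ^ 2 + (-2)) * ((a ^ 2 + (-2)) ^ 2 + (-2)) = 8
    linear_combination ((8 : ℝ) + 16 * a - 24 * a ^ 2 - 8 * a ^ 3 + 8 * a ^ 4) * hcuba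
  have hvalq : M (-2) (ptilde (-2)) = -8 := by
    show 8 * b * (b ^ 2 + (-2)) * ((b ^ 2 + (-2)) ^ 2 + (-2)) = -8
    linear_combination ((8 : ℝ) - 8 * b - 24 * b ^ 2 + 8 * b ^ 4) * hcubb
  -- sum has derivative 8 and value 0
  have hs : HasDerivAt (fun c => M c (p c) + M c (ptilde c)) 8 (-2) := by
    refine (hg.fun_add hgt).congr_deriv (Eq.symm ?_); norm_num
  have hs0 : M (-2) (p (-2)) + M (-2) (ptilde (-2)) = 0 := by
    rw [hvalp, hvalq]; norm_num
  -- eventual positivity / negativity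
  have hmono : nhdsWithin (-2 : ℝ) (Set.Ioi (-2)) ≤ nhdsWithin (-2 : ℝ) {(-2 : ℝ)}ᶜ :=
    nhdsWithin_mono _ fun y hy => by
      simp only [Set.mem_compl_iff, Set.mem_singleton_iff]
      exact ne_of_gt hy
  have hposp : ∀ᶠ c in nhdsWithin (-2 : ℝ) (Set.Ioi (-2)), 0 < M c (p c) := by
    have ht : Filter.Tendsto (fun c => M c (p c)) (nhds (-2 : ℝ)) (nhds 8) := by
      rw [← hvalp]; exact hg.continuousAt
    exact (ht.eventually (eventually_gt_nhds (by norm_num))).filter_mono nhdsWithin_le_nhds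
  have hnegq : ∀ᶠ c in nhdsWithin (-2 : ℝ) (Set.Ioi (-2)), M c (ptilde c) < 0 := by
    have ht : Filter.Tendsto (fun c => M c (ptilde c)) (nhds (-2 : ℝ)) (nhds (-8)) := by
      rw [← hvalq]; exact hgt.continuousAt
    exact (ht.eventually (eventually_lt_nhds (by norm_num))).filter_mono nhdsWithin_le_nhds
  have hslope : Filter.Tendsto (slope (fun c => M c (p c) + M c (ptilde c)) (-2))
      (nhdsWithin (-2 : ℝ) (Set.Ioi (-2))) (nhds 8) :=
    (hasDerivAt_iff_tendsto_slope.mp hs).mono_left hmono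
  have hslopepos : ∀ᶠ c in nhdsWithin (-2 : ℝ) (Set.Ioi (-2)),
      0 < slope (fun c => M c (p c) + M c (ptilde c)) (-2) c :=
    hslope.eventually (eventually_gt_nhds (by norm_num))
  have hself : ∀ᶠ c in nhdsWithin (-2 : ℝ) (Set.Ioi (-2)), c ∈ Set.Ioi (-2 : ℝ) :=
    self_mem_nhdsWithin
  have hfin : ∀ᶠ c in nhdsWithin (-2 : ℝ) (Set.Ioi (-2)),
      |M c (ptilde c)| < |M c (p c)| := by
    filter_upwards [hposp, hnegq, hslopepos, hself] with c h1 h2 h3 h4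
    have hc2 : (0 : ℝ) < c - (-2) := by simpa using sub_pos.mpr (Set.mem_Ioi.mp h4)
    have hsum : 0 < M c (p c) + M c (ptilde c) := by
      have h6 := mul_pos h3 hc2
      simp only [slope_def_field] at h6
      rw [div_mul_cancel₀ _ (ne_of_gt hc2)] at h6
      linarith
    rw [abs_of_pos h1, abs_of_neg h2]
    linarith
  rw [Filter.eventually_iff, mem_nhdsGT_iff_exists_Ioo_subset] at hfin
  obtain ⟨u, hu1, hu2⟩ := hfin
  refine ⟨u + 2, by have := Set.mem_Ioi.mp hu1; linarith, fun c hc1 hc2 => hu2 ⟨hc1, by linarith⟩⟩
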